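/- (Li–Yorke chaos) Let f : ℝ × ℝ → ℝ be continuous and 1-periodic in the time variable, and suppose the equation x' = f(t,x) admits a solution x with x(t+2) = x(t) for all t ∈ ℝ and x(t₁+1) ≠ x(t₁) for some t₁ ∈ ℝ. Then there exists a compact subset W of C(ℝ,ℝ), consisting of solutions of x' = f(t,x) and invariant under the time-one shift ψ₁, and an uncountable set S ⊆ W which is scrambled for ψ = ψ₁|_W with respect to the metric ρ: for all w, v ∈ S with w ≠ v, liminf_{n→∞} ρ(ψⁿ(w), ψⁿ(v)) = 0 and limsup_{n→∞} ρ(ψⁿ(w), ψⁿ(v)) > 0. -/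

import Mathlib

/-- `x` is a (classical) solution of the ODE `x' = f(t,x)` on the whole real line. -/
def IsSolution (f : ℝ × ℝ → ℝ) (x : ℝ → ℝ) : Prop :=
  ∀ t : ℝ, HasDerivAt x (f (t, x t)) t

/-- The time-one shift `ψ₁` on `C(ℝ, ℝ)`: `shiftOne w = w (· + 1)`. -/
def shiftOne (w : C(ℝ, ℝ)) : C(ℝ, ℝ) :=
  w.comp ⟨fun t => t + 1, by continuity⟩

/-- `ϑ_m(f,g) = max {|f t - g t| : t ∈ [-m, m]}`. -/
noncomputable def theta (m : ℕ) (f g : C(ℝ, ℝ)) : ℝ :=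
  sSup ((fun t => |f t - g t|) '' Set.Icc (-(m : ℝ)) (m : ℝ))

/-- The metric `ρ(f,g) = Σ_{m=1}^∞ 2^{-m} ϑ_m(f,g)/(1 + ϑ_m(f,g))` of uniform
convergence on compact sets. -/
noncomputable def rho (f g : C(ℝ, ℝ)) : ℝ :=
  ∑' m : ℕ, (theta (m + 1) f g / (1 + theta (m + 1) f g)) / 2 ^ (m + 1)

open Set Filter Asymptotics

section Aux

lemma nat_bool_uncountable : ¬ (Set.univ : Set (ℕ → Bool)).Countable := by
  rw [Set.countable_univ_iff]
  intro h
  obtain ⟨F, hF⟩ := exists_surjective_nat (ℕ → Bool)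
  obtain ⟨n, hn⟩ := hF (fun n => !(F n n))
  have := congrFun hn n
  simp at this




lemma theta_bddAbove (m : ℕ) (w v : C(ℝ,ℝ)) :
    BddAbove ((fun t => |w t - v t|) '' Set.Icc (-(m:ℝ)) m) :=
  (isCompact_Icc.image_of_continuousOn ((w.continuous.sub v.continuous).abs.continuousOn)).bddAbove

lemma abs_le_theta (m : ℕ) (w v : C(ℝ,ℝ)) {t : ℝ} (ht : t ∈ Set.Icc (-(m:ℝ)) m) :
    |w t - v t| ≤ theta m w v :=
  le_csSup (theta_bddAbove m w v) ⟨t, ht, rfl⟩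

lemma theta_nonneg (m : ℕ) (w v : C(ℝ,ℝ)) : 0 ≤ theta m w v :=
  (abs_nonneg _).trans (abs_le_theta m w v ⟨neg_nonpos.mpr (Nat.cast_nonneg m), Nat.cast_nonneg m⟩)

lemma theta_le {m : ℕ} {w v : C(ℝ,ℝ)} {C : ℝ} (h : ∀ t ∈ Set.Icc (-(m:ℝ)) m, |w t - v t| ≤ C) :
    theta m w v ≤ C :=
  csSup_le ⟨|w 0 - v 0|, ⟨0, ⟨neg_nonpos.mpr (Nat.cast_nonneg m), Nat.cast_nonneg m⟩, rfl⟩⟩ (by rintro r ⟨t, ht, rfl⟩; exact h t ht)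

lemma rho_term_nonneg (m : ℕ) (w v : C(ℝ,ℝ)) :
    0 ≤ (theta (m + 1) w v / (1 + theta (m + 1) w v)) / 2 ^ (m + 1) := by
  have h := theta_nonneg (m+1) w v
  positivity

lemma rho_term_le (m : ℕ) (w v : C(ℝ,ℝ)) :
    (theta (m + 1) w v / (1 + theta (m + 1) w v)) / 2 ^ (m + 1) ≤ (1/2:ℝ) ^ (m+1) := by
  have h := theta_nonneg (m+1) w v
  have h1 : theta (m+1) w v / (1 + theta (m+1) w v) ≤ 1 := by
    rw [div_le_one (by linarith)]; linarith
  have h2 : (0:ℝ) < 2 ^ (m+1) := by positivity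
  rw [one_div_pow]
  exact div_le_div_of_nonneg_right h1 (by positivity)

lemma summable_half_succ : Summable (fun m : ℕ => (1/2:ℝ)^(m+1)) := by
  simpa [pow_succ] using summable_geometric_two.mul_right (1/2:ℝ)

lemma rho_summable (w v : C(ℝ,ℝ)) :
    Summable (fun m : ℕ => (theta (m + 1) w v / (1 + theta (m + 1) w v)) / 2 ^ (m + 1)) :=
  Summable.of_nonneg_of_le (fun m => rho_term_nonneg m w v) (fun m => rho_term_le m w v)
    summable_half_succ

lemma rho_nonneg (w v : C(ℝ,ℝ)) : 0 ≤ rho w v :=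
  tsum_nonneg (fun m => rho_term_nonneg m w v)

lemma rho_le_two (w v : C(ℝ,ℝ)) : rho w v ≤ 2 := by
  have := Summable.tsum_le_tsum (fun m => rho_term_le m w v) (rho_summable w v) summable_half_succ
  refine this.trans ?_
  have : ∑' m : ℕ, (1/2:ℝ)^(m+1) ≤ ∑' m : ℕ, (1/2:ℝ)^m := by
    refine Summable.tsum_le_tsum (fun m => ?_) summable_half_succ summable_geometric_two
    exact pow_le_pow_of_le_one (by norm_num) (by norm_num) (Nat.le_succ m)
  rw [tsum_geometric_two] at this
  exact this

lemma tsum_half_succ : ∑' m : ℕ, (1/2:ℝ)^(m+1) = 1 := by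
  simp_rw [pow_succ]
  rw [tsum_mul_right, tsum_geometric_two]; norm_num

lemma tsum_tail (M : ℕ) : ∑' m:ℕ, (if M ≤ m then (1/2:ℝ)^(m+1) else 0) = (1/2)^M := by
  have hinj : Function.Injective (fun j : ℕ => j + M) := add_left_injective M
  have hsupp : Function.support (fun m : ℕ => (if M ≤ m then (1/2:ℝ)^(m+1) else 0)) ⊆
      Set.range (fun j : ℕ => j + M) := by
    intro m hm
    by_cases h : M ≤ m
    · exact ⟨m - M, by show m - M + M = m; omega⟩
    · simp [h] at hm
  rw [← hinj.tsum_eq hsupp]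
  have : ∀ j : ℕ, (if M ≤ j + M then (1/2:ℝ)^(j+M+1) else 0) = (1/2:ℝ)^(j+1) * (1/2)^M := by
    intro j; rw [if_pos (by omega)]; ring
  simp_rw [this]
  rw [tsum_mul_right, tsum_half_succ, one_mul]

lemma rho_le_of_eqOn {w v : C(ℝ,ℝ)} (M : ℕ)
    (h : ∀ t ∈ Set.Icc (-(M:ℝ)) M, w t = v t) : rho w v ≤ (1/2)^M := by
  rw [← tsum_tail M]
  refine Summable.tsum_le_tsum (fun m => ?_) (rho_summable w v)
    (Summable.of_nonneg_of_le (fun m => by positivity)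
      (fun m => by by_cases h : M ≤ m <;> simp [h] <;> positivity) summable_half_succ)
  by_cases hm : M ≤ m
  · rw [if_pos hm]; exact rho_term_le m w v
  · rw [if_neg hm]
    have hsub : Set.Icc (-((m:ℝ)+1)) ((m:ℝ)+1) ⊆ Set.Icc (-(M:ℝ)) M := by
      apply Set.Icc_subset_Icc <;> push_cast <;> [linarith [show ((m:ℝ)+1) ≤ M by exact_mod_cast Nat.succ_le_of_lt (lt_of_not_ge hm)]; exact_mod_cast Nat.succ_le_of_lt (lt_of_not_ge hm)]
    have hth : theta (m+1) w v ≤ 0 := theta_le (by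
      intro t ht
      have ht' : t ∈ Set.Icc (-((m:ℝ)+1)) ((m:ℝ)+1) := by push_cast at ht ⊢; exact ht
      rw [h t (hsub ht'), sub_self, abs_zero])
    have hth' := theta_nonneg (m+1) w v
    have : theta (m+1) w v = 0 := le_antisymm hth hth'
    rw [this]; norm_num

lemma le_rho {w v : C(ℝ,ℝ)} (m₀ : ℕ) {d : ℝ} (hd : 0 ≤ d) {t : ℝ}
    (ht : t ∈ Set.Icc (-((m₀:ℝ)+1)) ((m₀:ℝ)+1)) (hdle : d ≤ |w t - v t|) :
    d / (1+d) / 2^(m₀+1) ≤ rho w v := by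
  have key : d / (1+d) / 2^(m₀+1) ≤ (theta (m₀ + 1) w v / (1 + theta (m₀ + 1) w v)) / 2 ^ (m₀ + 1) := by
    have hth : d ≤ theta (m₀+1) w v := hdle.trans (abs_le_theta (m₀+1) w v (by push_cast; exact ht))
    have h0 := theta_nonneg (m₀+1) w v
    refine div_le_div_of_nonneg_right ?_ (by positivity)
    rw [div_le_div_iff₀ (by linarith) (by linarith)]
    nlinarith
  exact key.trans (Summable.le_tsum (rho_summable w v) m₀ (fun j _ => rho_term_nonneg j w v))


def bitN (u : ℕ → Bool) (n : ℕ) : Bool :=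
  if Nat.sqrt n % 2 = 1 then u (Nat.unpair (Nat.sqrt n / 2)).1 else false

def bitZ (u : ℕ → Bool) : ℤ → Bool := fun k => if 0 ≤ k then bitN u k.toNat else false

def Tb : (ℤ → Bool) → (ℤ → Bool) := fun σ k => !σ (k+1)

lemma sqrt_eq_of {j n : ℕ} (h1 : j*j ≤ n) (h2 : n < (j+1)*(j+1)) : Nat.sqrt n = j := by
  have ha : j ≤ Nat.sqrt n := Nat.le_sqrt.mpr h1
  have hb : Nat.sqrt n < j+1 := Nat.sqrt_lt'.mpr (by rw [pow_two]; exact h2)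
  omega

lemma agree_window (u u' : ℕ → Bool) (L : ℕ) :
    ∃ᶠ n : ℕ in atTop, ∀ k : ℤ, |k| ≤ (L:ℤ) → bitZ u (k + n) = bitZ u' (k + n) := by
  rw [frequently_atTop]
  intro N
  set j := 2 * (max (L+1) N) with hj
  have hLj : L + 1 ≤ j := le_trans (le_max_left _ _) (Nat.le_mul_of_pos_left _ (by norm_num))
  have hNj : N ≤ j := le_trans (le_max_right _ _) (Nat.le_mul_of_pos_left _ (by norm_num))
  refine ⟨j*j + j, le_trans hNj (Nat.le_add_left j (j*j)), ?_⟩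
  intro k hk
  obtain ⟨hk1, hk2⟩ := abs_le.mp hk
  have hcast : ((j*j + j : ℕ) : ℤ) = (j:ℤ)*(j:ℤ) + (j:ℤ) := by push_cast; ring
  have hjZ : (L:ℤ) + 1 ≤ (j:ℤ) := by exact_mod_cast hLj
  have hjj : (0:ℤ) ≤ (j:ℤ)*(j:ℤ) := by positivity
  have hk0 : 0 ≤ k + (j*j + j : ℕ) := by rw [hcast]; linarith
  set p := (k + (j*j + j : ℕ) : ℤ).toNat with hp
  have hpe : (p:ℤ) = k + (j*j + j : ℕ) := Int.toNat_of_nonneg hk0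
  rw [hcast] at hpe
  have h1 : j*j ≤ p := by
    have : ((j*j:ℕ):ℤ) ≤ (p:ℤ) := by push_cast; linarith
    exact_mod_cast this
  have h2 : p < (j+1)*(j+1) := by
    have : (p:ℤ) < (((j+1)*(j+1) : ℕ):ℤ) := by push_cast; linarith
    exact_mod_cast this
  have hs : Nat.sqrt p = j := sqrt_eq_of h1 h2
  have hodd : ¬ (Nat.sqrt p % 2 = 1) := by rw [hs]; omega
  simp only [bitZ, if_pos hk0, ← hp, bitN, if_neg hodd]

lemma diff_often (u u' : ℕ → Bool) (i : ℕ) (hi : u i ≠ u' i) :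
    ∃ᶠ n : ℕ in atTop, bitN u n ≠ bitN u' n := by
  rw [frequently_atTop]
  intro N
  set j := 2 * Nat.pair i N + 1 with hj
  have hpair : N ≤ Nat.pair i N := Nat.right_le_pair i N
  have hNjj : N ≤ j*j := by nlinarith
  refine ⟨j*j, hNjj, ?_⟩
  have hs : Nat.sqrt (j*j) = j := sqrt_eq_of le_rfl (by nlinarith)
  have hodd : Nat.sqrt (j*j) % 2 = 1 := by omega
  have hdiv : Nat.sqrt (j*j) / 2 = Nat.pair i N := by omega
  simp only [bitN, if_pos hodd, hdiv, Nat.unpair_pair]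
  exact hi

lemma bitN_inj {u u' : ℕ → Bool} (h : ∀ n, bitN u n = bitN u' n) : u = u' := by
  funext i
  set j := 2 * Nat.pair i 0 + 1 with hj
  have hs : Nat.sqrt (j*j) = j := sqrt_eq_of le_rfl (by nlinarith)
  have := h (j*j)
  simp only [bitN, hs] at this
  rw [if_pos (by omega), if_pos (by omega)] at this
  have hdiv : j / 2 = Nat.pair i 0 := by omega
  rwa [hdiv, Nat.unpair_pair] at this

lemma Tb_surj : Function.Surjective Tb := by
  intro τ
  refine ⟨fun k => !τ (k-1), funext fun k => ?_⟩
  simp [Tb]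

lemma Tb_iter_eq (n : ℕ) (α β : ℤ → Bool) (k : ℤ) :
    ((Tb^[n] α) k = (Tb^[n] β) k) ↔ (α (k + n) = β (k + n)) := by
  induction n generalizing α β with
  | zero => simp
  | succ n ih =>
    rw [Function.iterate_succ_apply, Function.iterate_succ_apply, ih (Tb α) (Tb β)]
    have h1 : Tb α (k + n) = !α (k + n + 1) := rfl
    have h2 : Tb β (k + n) = !β (k + n + 1) := rfl
    rw [h1, h2]
    have : k + ((n:ℤ)+1) = k + n + 1 := by ring
    push_cast [this]
    constructor
    · intro h; exact Bool.not_inj h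
    · intro h; rw [h]


lemma g_abs (x : ℝ → ℝ) (hx2 : ∀ t, x (t+2) = x t) (k : ℤ) (t : ℝ) :
    |x (t + k + 1) - x (t + k)| = |x (t + 1) - x t| := by
  induction k using Int.induction_on with
  | zero => simp
  | succ n ih =>
    push_cast at ih ⊢
    have h2 : x (t + ((n:ℝ)+1) + 1) = x (t + n) := by
      rw [show t + ((n:ℝ)+1) + 1 = (t + n) + 2 by ring, hx2]
    rw [h2, show t + ((n:ℝ)+1) = (t + n) + 1 by ring, abs_sub_comm]
    exact ih
  | pred n ih =>
    push_cast at ih ⊢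
    have h2 : x (t + (-(n:ℝ)-1)) = x (t + -(n:ℝ) + 1) := by
      rw [show t + -(n:ℝ) + 1 = (t + (-(n:ℝ)-1)) + 2 by ring, hx2]
    rw [show t + (-(n:ℝ)-1) + 1 = t + -(n:ℝ) by ring, h2, abs_sub_comm]
    exact ih

lemma F_cont (x : ℝ → ℝ) (hxc : Continuous x) (t₀ : ℝ)
    (hz : ∀ k : ℤ, x (t₀ + k + 1) = x (t₀ + k)) :
    Continuous (fun p : (ℤ → Bool) × ℝ => if p.1 ⌊p.2 - t₀⌋ then x (p.2+1) else x p.2) := by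
  rw [continuous_iff_continuousAt]
  rintro ⟨σ, t⟩
  by_cases hfr : Int.fract (t - t₀) = 0
  · -- junction point
    have hkt : t = t₀ + (⌊t - t₀⌋ : ℝ) := by
      have := Int.fract_add_floor (t - t₀)
      rw [hfr, zero_add] at this
      linarith
    have heq : x (t+1) = x t := by
      conv_lhs => rw [hkt]
      conv_rhs => rw [hkt]
      exact hz ⌊t - t₀⌋
    have hFt : (if σ ⌊t - t₀⌋ then x (t+1) else x t) = x t := by split <;> simp [heq]
    unfold ContinuousAt
    show Tendsto _ _ (nhds (if σ ⌊t - t₀⌋ then x (t+1) else x t))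
    rw [hFt]
    have hsub : Tendsto (fun p : (ℤ → Bool) × ℝ =>
        (if p.1 ⌊p.2 - t₀⌋ then x (p.2+1) else x p.2) - x t) (nhds (σ, t)) (nhds 0) := by
      apply squeeze_zero_norm (a := fun p : (ℤ → Bool) × ℝ => ‖x (p.2+1) - x t‖ + ‖x p.2 - x t‖)
      · intro p
        by_cases h : p.1 ⌊p.2 - t₀⌋ <;> simp only [h, if_true, if_false]
        · exact (le_add_of_nonneg_right (norm_nonneg _)).trans_eq' rfl
        · exact le_add_of_nonneg_left (norm_nonneg _)
      · have hc : Continuous (fun p : (ℤ → Bool) × ℝ => ‖x (p.2+1) - x t‖ + ‖x p.2 - x t‖) := by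
          apply Continuous.add
          · exact ((hxc.comp (continuous_snd.add continuous_const)).sub continuous_const).norm
          · exact ((hxc.comp continuous_snd).sub continuous_const).norm
        have := hc.continuousAt (x := (σ, t))
        unfold ContinuousAt at this
        simpa [heq] using this
    have := hsub.add (tendsto_const_nhds (x := x t))
    simpa using this
  · -- locally constant
    set k := ⌊t - t₀⌋ with hk
    have h1 : (k:ℝ) < t - t₀ := by
      rcases lt_or_eq_of_le (Int.floor_le (t - t₀)) with h | h
      · exact h
      · exact absurd (by rw [← h, Int.fract_intCast]) hfr
    have h2 : t - t₀ < k+1 := Int.lt_floor_add_one _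
    have hU : IsOpen ((fun p : (ℤ → Bool) × ℝ => p.1 k) ⁻¹' {σ k} ∩
        (fun p : (ℤ → Bool) × ℝ => p.2) ⁻¹' Set.Ioo (t₀ + k) (t₀ + (k+1))) :=
      (IsOpen.preimage ((continuous_apply k).comp continuous_fst) (isOpen_discrete _)).inter
        (isOpen_Ioo.preimage continuous_snd)
    have hmem : (σ, t) ∈ (fun p : (ℤ → Bool) × ℝ => p.1 k) ⁻¹' {σ k} ∩
        (fun p : (ℤ → Bool) × ℝ => p.2) ⁻¹' Set.Ioo (t₀ + k) (t₀ + (k+1)) := by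
      refine ⟨rfl, ?_, ?_⟩
      · show t₀ + (k:ℝ) < t; linarith
      · show t < t₀ + ((k:ℝ)+1); linarith
    have hGc : Continuous (fun p : (ℤ → Bool) × ℝ => if σ k then x (p.2+1) else x p.2) := by
      split
      · exact hxc.comp (continuous_snd.add continuous_const)
      · exact hxc.comp continuous_snd
    apply (hGc.continuousAt (x := (σ, t))).congr
    apply Filter.eventuallyEq_of_mem (hU.mem_nhds hmem)
    rintro ⟨τ, s⟩ ⟨hτ, hs1, hs2⟩
    simp only [Set.mem_preimage, Set.mem_singleton_iff] at hτ
    have hfl : ⌊s - t₀⌋ = k := by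
      rw [Int.floor_eq_iff]
      constructor
      · simp only [Set.mem_Ioo] at hs1 hs2 ⊢; push_cast; linarith [hs1]
      · push_cast; linarith [hs2]
    simp only [hfl, hτ]

lemma wfun_deriv (f : ℝ × ℝ → ℝ) (x : ℝ → ℝ)
    (hx : ∀ t, HasDerivAt x (f (t, x t)) t)
    (hy : ∀ t, HasDerivAt (fun s => x (s+1)) (f (t, x (t+1))) t)
    (t₀ : ℝ) (hz : ∀ k : ℤ, x (t₀ + k + 1) = x (t₀ + k))
    (σ : ℤ → Bool) (t : ℝ) :
    HasDerivAt (fun s => if σ ⌊s - t₀⌋ then x (s+1) else x s)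
      (f (t, if σ ⌊t - t₀⌋ then x (t+1) else x t)) t := by
  by_cases hfr : Int.fract (t - t₀) = 0
  · -- junction
    have hkt : t = t₀ + (⌊t - t₀⌋ : ℝ) := by
      have := Int.fract_add_floor (t - t₀)
      rw [hfr, zero_add] at this
      linarith
    have heq : x (t+1) = x t := by
      conv_lhs => rw [hkt]
      conv_rhs => rw [hkt]
      exact hz ⌊t - t₀⌋
    have hval : (if σ ⌊t - t₀⌋ then x (t+1) else x t) = x t := by split <;> simp [heq]
    rw [hval]
    set L := f (t, x t) with hL
    rw [hasDerivAt_iff_isLittleO]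
    have hX : (fun s => x s - x t - (s - t) • L) =o[nhds t] fun s => s - t :=
      hasDerivAt_iff_isLittleO.mp (hx t)
    have hY : (fun s => x (s+1) - x t - (s - t) • L) =o[nhds t] fun s => s - t := by
      have := hasDerivAt_iff_isLittleO.mp (hy t)
      rwa [heq] at this
    have hsum : (fun s => ‖x (s+1) - x t - (s - t) • L‖ + ‖x s - x t - (s - t) • L‖)
        =o[nhds t] fun s => s - t := hY.norm_left.add hX.norm_left
    refine (Asymptotics.isBigO_of_le (nhds t) (fun s => ?_)).trans_isLittleO hsum
    rw [Real.norm_of_nonneg (add_nonneg (norm_nonneg _) (norm_nonneg _))]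
    by_cases h : σ ⌊s - t₀⌋ <;> simp only [h, if_true, if_false, hval]
    · exact le_add_of_nonneg_right (norm_nonneg _)
    · exact le_add_of_nonneg_left (norm_nonneg _)
  · -- non-junction
    set k := ⌊t - t₀⌋ with hk
    have h1 : (k:ℝ) < t - t₀ := by
      rcases lt_or_eq_of_le (Int.floor_le (t - t₀)) with h | h
      · exact h
      · exact absurd (by rw [← h, Int.fract_intCast]) hfr
    have h2 : t - t₀ < k+1 := Int.lt_floor_add_one _
    have hev : (fun s => if σ ⌊s - t₀⌋ then x (s+1) else x s) =ᶠ[nhds t]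
        (fun s => if σ k then x (s+1) else x s) := by
      apply Filter.eventuallyEq_of_mem (IsOpen.mem_nhds isOpen_Ioo
        (show t ∈ Set.Ioo (t₀ + (k:ℝ)) (t₀ + ((k:ℝ)+1)) from ⟨by linarith, by linarith⟩))
      intro s hs
      simp only [Set.mem_Ioo] at hs
      have hfl : ⌊s - t₀⌋ = k := by
        rw [Int.floor_eq_iff]
        exact ⟨by linarith [hs.1], by linarith [hs.2]⟩
      simp only [hfl]
    have hbase : HasDerivAt (fun s => if σ k then x (s+1) else x s)
        (f (t, if σ ⌊t - t₀⌋ then x (t+1) else x t)) t := by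
      rw [← hk]
      by_cases h : σ k <;> simp only [h, if_true, if_false]
      · exact hy t
      · exact hx t
    exact hbase.congr_of_eventuallyEq hev

lemma bitZ_coe (u : ℕ → Bool) (n : ℕ) : bitZ u (n : ℤ) = bitN u n := by
  simp [bitZ]

end Aux

theorem li_yorke_chaos
    (f : ℝ × ℝ → ℝ) (hf : Continuous f)
    (hper : ∀ t x : ℝ, f (t + 1, x) = f (t, x))
    (x : ℝ → ℝ) (hx : IsSolution f x)
    (hx2 : ∀ t : ℝ, x (t + 2) = x t)
    (t₁ : ℝ) (ht₁ : x (t₁ + 1) ≠ x t₁) :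
    ∃ W : Set C(ℝ, ℝ), IsCompact W ∧
      (∀ w ∈ W, IsSolution f w) ∧
      shiftOne '' W = W ∧
      ∃ S ⊆ W, ¬ S.Countable ∧
        ∀ w ∈ S, ∀ v ∈ S, w ≠ v →
          Filter.atTop.liminf (fun n : ℕ => rho (shiftOne^[n] w) (shiftOne^[n] v)) = 0 ∧
          0 < Filter.atTop.limsup (fun n : ℕ => rho (shiftOne^[n] w) (shiftOne^[n] v)) := by
  classical
  have hxc : Continuous x := by
    rw [continuous_iff_continuousAt]; intro t; exact (hx t).continuousAt
  have hy : ∀ t, HasDerivAt (fun s => x (s+1)) (f (t, x (t+1))) t := by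
    intro t
    have h1 : HasDerivAt (fun s : ℝ => s + 1) 1 t := (hasDerivAt_id t).add_const 1
    have h2 := (hx (t+1)).comp t h1
    simpa [Function.comp_def, hper] using h2
  -- find the crossing point t₀
  have hg1 : x (t₁ + 1 + 1) - x (t₁ + 1) = -(x (t₁+1) - x t₁) := by
    rw [show t₁ + 1 + 1 = t₁ + 2 by ring, hx2]; ring
  have hgc : Continuous (fun t => x (t+1) - x t) :=
    (hxc.comp (continuous_id.add continuous_const)).sub hxc
  obtain ⟨t₀, ht₀mem, hgt₀⟩ : ∃ t₀ ∈ Set.Icc t₁ (t₁+1), x (t₀+1) - x t₀ = 0 := by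
    rcases lt_trichotomy (x (t₁+1) - x t₁) 0 with h | h | h
    · have hsub := intermediate_value_Icc (le_of_lt (lt_add_one t₁)) hgc.continuousOn
      have h0 : (0:ℝ) ∈ Set.Icc (x (t₁+1) - x t₁) (x (t₁+1+1) - x (t₁+1)) :=
        ⟨le_of_lt h, by rw [hg1]; linarith⟩
      obtain ⟨t₀, ht₀, h0'⟩ := hsub h0
      exact ⟨t₀, ht₀, h0'⟩
    · exact absurd (by linarith : x (t₁+1) = x t₁) ht₁
    · have hsub := intermediate_value_Icc' (le_of_lt (lt_add_one t₁)) hgc.continuousOn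
      have h0 : (0:ℝ) ∈ Set.Icc (x (t₁+1+1) - x (t₁+1)) (x (t₁+1) - x t₁) :=
        ⟨by rw [hg1]; linarith, le_of_lt h⟩
      obtain ⟨t₀, ht₀, h0'⟩ := hsub h0
      exact ⟨t₀, ht₀, h0'⟩
  have hz : ∀ k : ℤ, x (t₀ + k + 1) = x (t₀ + k) := by
    intro k
    have h := g_abs x hx2 k t₀
    rw [show x (t₀ + 1) - x t₀ = 0 from hgt₀, abs_zero] at h
    have := abs_eq_zero.mp h
    linarith
  -- the special point t₂ and the separation constant d
  set t₂ : ℝ := t₀ + Int.fract (t₁ - t₀) with ht₂def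
  have hfl2 : ∀ n : ℕ, ⌊t₂ + n - t₀⌋ = (n:ℤ) := by
    intro n
    rw [show t₂ + n - t₀ = Int.fract (t₁ - t₀) + ((n:ℤ):ℝ) by push_cast [ht₂def]; ring,
      Int.floor_add_intCast, Int.floor_fract, zero_add]
  have hfl0 : ⌊t₂ - t₀⌋ = 0 := by
    have := hfl2 0
    simpa using this
  set d : ℝ := |x (t₂ + 1) - x t₂| with hddef
  have hdper : ∀ k : ℤ, |x (t₂ + k + 1) - x (t₂ + k)| = d := fun k => g_abs x hx2 k t₂
  have hdpos : 0 < d := by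
    have ht₂eq : t₂ = t₁ + ((-⌊t₁ - t₀⌋ : ℤ):ℝ) := by
      rw [ht₂def, Int.fract]; push_cast; ring
    have := g_abs x hx2 (-⌊t₁ - t₀⌋) t₁
    rw [← ht₂eq] at this
    rw [hddef, this]
    rw [abs_pos, sub_ne_zero]
    exact ht₁
  -- the family of piecewise solutions
  have hFc := F_cont x hxc t₀ hz
  set Φ : (ℤ → Bool) → C(ℝ,ℝ) := fun σ =>
    ⟨fun t => if σ ⌊t - t₀⌋ then x (t+1) else x t, by
      have := hFc.comp (Continuous.prodMk (continuous_const (y := σ)) continuous_id)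
      simpa [Function.comp_def] using this⟩ with hΦdef
  have hΦapp : ∀ σ t, Φ σ t = if σ ⌊t - t₀⌋ then x (t+1) else x t := fun _ _ => rfl
  have hΦc : Continuous Φ := by
    apply ContinuousMap.continuous_of_continuous_uncurry
    exact hFc
  have hshift : ∀ σ, shiftOne (Φ σ) = Φ (Tb σ) := by
    intro σ
    ext t
    show Φ σ (t+1) = Φ (Tb σ) t
    rw [hΦapp, hΦapp]
    have hfl : ⌊t + 1 - t₀⌋ = ⌊t - t₀⌋ + 1 := by
      rw [show t + 1 - t₀ = (t - t₀) + 1 by ring, Int.floor_add_one]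
    rw [hfl]
    have hxx : x (t+1+1) = x t := by rw [show t+1+1 = t+2 by ring, hx2]
    cases hb : σ (⌊t - t₀⌋ + 1) <;> simp [Tb, hb, hxx]
  have hiter : ∀ (n : ℕ) σ, shiftOne^[n] (Φ σ) = Φ (Tb^[n] σ) := by
    intro n σ
    induction n with
    | zero => simp
    | succ n ih =>
      rw [Function.iterate_succ_apply', Function.iterate_succ_apply', ih, hshift]
  refine ⟨Set.range Φ, isCompact_range hΦc, ?_, ?_, Set.range (fun u : ℕ → Bool => Φ (bitZ u)),
    ?_, ?_, ?_⟩
  · -- solutions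
    rintro w ⟨σ, rfl⟩
    intro t
    exact wfun_deriv f x hx hy t₀ hz σ t
  · -- shift invariance
    have hcomp : shiftOne ∘ Φ = Φ ∘ Tb := funext hshift
    calc shiftOne '' Set.range Φ = Set.range (shiftOne ∘ Φ) := (Set.range_comp _ _).symm
      _ = Set.range (Φ ∘ Tb) := by rw [hcomp]
      _ = Set.range Φ := by rw [Set.range_comp, Tb_surj.range_eq, Set.image_univ]
  · -- S ⊆ W
    rintro w ⟨u, rfl⟩
    exact ⟨bitZ u, rfl⟩
  · -- S uncountable
    intro hc
    have hinj : Function.Injective (fun u : ℕ → Bool => Φ (bitZ u)) := by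
      intro u u' h
      apply bitN_inj
      intro n
      have hval := congrArg (fun w : C(ℝ,ℝ) => w (t₂ + n)) h
      simp only [hΦapp, hfl2 n] at hval
      have hne : x (t₂ + n + 1) ≠ x (t₂ + n) := by
        have h1 := hdper (n:ℤ)
        rw [show ((n:ℤ):ℝ) = (n:ℝ) by push_cast; ring] at h1
        intro hcontra
        rw [hcontra, sub_self, abs_zero] at h1
        linarith
      simp only [bitZ_coe] at hval
      cases hA : bitN u n <;> cases hB : bitN u' n
      · rfl
      · simp [hA, hB] at hval
        exact absurd hval.symm hne
      · simp [hA, hB] at hval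
        exact absurd hval hne
      · rfl
    have := hc.preimage hinj
    rw [Set.preimage_range] at this -- ?
    exact nat_bool_uncountable (by simpa using this)
  · -- scrambled
    rintro w ⟨u, rfl⟩ v ⟨u', rfl⟩ hwv
    have huu : u ≠ u' := fun h => hwv (by rw [h])
    obtain ⟨i, hi⟩ := Function.ne_iff.mp huu
    set α := bitZ u with hα
    set β := bitZ u' with hβ
    have hrw : ∀ n : ℕ, rho (shiftOne^[n] (Φ α)) (shiftOne^[n] (Φ β))
        = rho (Φ (Tb^[n] α)) (Φ (Tb^[n] β)) := by
      intro n; rw [hiter, hiter]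
    -- agreement: frequently small
    have hagree : ∀ M : ℕ, ∃ᶠ n in atTop,
        rho (Φ (Tb^[n] α)) (Φ (Tb^[n] β)) ≤ (1/2:ℝ)^M := by
      intro M
      set L : ℕ := M + ⌈|t₀|⌉₊ + 1 with hLdef
      apply (agree_window u u' L).mono
      intro n hn
      apply rho_le_of_eqOn M
      intro t ht
      rw [hΦapp, hΦapp]
      set k := ⌊t - t₀⌋ with hkdef
      have hc0 : |t₀| ≤ (⌈|t₀|⌉₊:ℝ) := Nat.le_ceil _
      have h1 : (k:ℝ) ≤ t - t₀ := Int.floor_le _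
      have h2 : t - t₀ - 1 < k := Int.sub_one_lt_floor _
      have hLcast : ((L:ℕ):ℝ) = (M:ℝ) + (⌈|t₀|⌉₊:ℝ) + 1 := by rw [hLdef]; push_cast; ring
      have habs : |(k:ℝ)| ≤ ((L:ℕ):ℝ) := by
        rw [hLcast, abs_le]
        obtain ⟨htl, htr⟩ := ht
        constructor
        · nlinarith [le_abs_self t₀, neg_abs_le t₀]
        · nlinarith [le_abs_self t₀, neg_abs_le t₀]
      have hkb : |k| ≤ (L:ℤ) := by
        rw [← Int.cast_abs] at habs
        exact_mod_cast habs
      have := (Tb_iter_eq n α β k).mpr (hn k hkb)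
      rw [this]
    constructor
    · -- liminf = 0
      have h0 : ∀ n : ℕ, 0 ≤ rho (shiftOne^[n] (Φ α)) (shiftOne^[n] (Φ β)) :=
        fun n => rho_nonneg _ _
      have h2b : ∀ n : ℕ, rho (shiftOne^[n] (Φ α)) (shiftOne^[n] (Φ β)) ≤ 2 :=
        fun n => rho_le_two _ _
      have hbdd : IsBoundedUnder (· ≥ ·) atTop
          (fun n : ℕ => rho (shiftOne^[n] (Φ α)) (shiftOne^[n] (Φ β))) :=
        ⟨0, Filter.eventually_map.mpr (Filter.Eventually.of_forall h0)⟩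
      have hbdd2 : IsBoundedUnder (· ≤ ·) atTop
          (fun n : ℕ => rho (shiftOne^[n] (Φ α)) (shiftOne^[n] (Φ β))) :=
        ⟨2, Filter.eventually_map.mpr (Filter.Eventually.of_forall h2b)⟩
      apply le_antisymm
      · apply le_of_forall_pos_le_add
        intro ε hε
        obtain ⟨M, hM⟩ := exists_pow_lt_of_lt_one hε (by norm_num : (1/2:ℝ) < 1)
        have hfreq : ∃ᶠ n in atTop,
            rho (shiftOne^[n] (Φ α)) (shiftOne^[n] (Φ β)) ≤ ε := by
          apply (hagree M).mono
          intro n hn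
          rw [hrw n]
          exact hn.trans (le_of_lt hM)
        have := Filter.liminf_le_of_frequently_le hfreq hbdd
        linarith
      · exact Filter.le_liminf_of_le hbdd2.isCoboundedUnder_ge (Filter.Eventually.of_forall h0)
    · -- limsup > 0
      set m₂ : ℕ := ⌈|t₂|⌉₊ with hm₂
      have hmem₂ : t₂ ∈ Set.Icc (-((m₂:ℝ)+1)) ((m₂:ℝ)+1) := by
        have := Nat.le_ceil |t₂|
        obtain ⟨ha, hb⟩ := abs_le.mp (this.trans (by rw [← hm₂]; linarith : (⌈|t₂|⌉₊:ℝ) ≤ (m₂:ℝ)+1))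
        exact ⟨ha, hb⟩
      have hεpos : 0 < d / (1+d) / 2^(m₂+1) := by positivity
      have hfreq : ∃ᶠ n in atTop, d / (1+d) / 2^(m₂+1)
          ≤ rho (shiftOne^[n] (Φ α)) (shiftOne^[n] (Φ β)) := by
        apply (diff_often u u' i hi).mono
        intro n hn
        rw [hrw n]
        apply le_rho m₂ (le_of_lt hdpos) hmem₂
        rw [hΦapp, hΦapp, hfl0]
        have hbitne : (Tb^[n] α) 0 ≠ (Tb^[n] β) 0 := by
          rw [Ne, Tb_iter_eq, zero_add, hα, hβ, bitZ_coe, bitZ_coe]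
          exact hn
        have hd2 : |x t₂ - x (t₂ + 1)| = d := by rw [abs_sub_comm]
        cases hA : (Tb^[n] α) 0 <;> cases hB : (Tb^[n] β) 0
        · exact absurd (hA.trans hB.symm) hbitne
        · simp only [hA, hB, Bool.false_eq_true, if_false, if_true]
          exact le_of_eq hd2.symm
        · simp only [hA, hB, Bool.false_eq_true, if_false, if_true]
          exact le_of_eq hddef
        · exact absurd (hA.trans hB.symm) hbitne
      have hbdd2 : IsBoundedUnder (· ≤ ·) atTop
          (fun n : ℕ => rho (shiftOne^[n] (Φ α)) (shiftOne^[n] (Φ β))) :=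
        ⟨2, Filter.eventually_map.mpr (Filter.Eventually.of_forall (fun n => rho_le_two _ _))⟩
      exact lt_of_lt_of_le hεpos (Filter.le_limsup_of_frequently_le hfreq hbdd2)
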